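/- Let λ > 0 with λ < κ² solve √(κ² − λ) = −√λ·cot(√λ) with 0 < √λ < π. Then the function u(x) defined by u(x) = sin(√λ x) for 0 ≤ x ≤ 1 and u(x) = sin(√λ)·exp(−√(κ²−λ)(x−1)) for x ≥ 1 is continuous on [0,∞), continuously differentiable on (0,∞), satisfies u(0)=0, u ∈ L²(0,∞), and solves −u'' + κ²·χ_{[1,∞)}·u = λu pointwise on (0,1) and (1,∞). -/

import Mathlib

open MeasureTheory Set

/-- Verification of the eigenfunction for `H_κ = −d²/dx² + κ²χ_{[1,∞)}` on `L²(0,∞)` with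
Dirichlet condition at `0`: if `0 < λ < κ²`, `0 < √λ < π` and
`√(κ² − λ) = −√λ·cot(√λ)`, then the piecewise function
`u(x) = sin(√λ x)` on `[0,1]`, `u(x) = sin(√λ)·e^{−√(κ²−λ)(x−1)}` on `[1,∞)` is continuous on
`[0,∞)`, continuously differentiable on `(0,∞)`, vanishes at `0`, lies in `L²(0,∞)`, and
satisfies `−u'' + κ²χ_{[1,∞)}u = λu` pointwise on `(0,1)` and `(1,∞)`. -/
theorem eigenfunction_verification_obstacle (κ lam : ℝ)
    (hlam : 0 < lam) (hlt : lam < κ ^ 2)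
    (hroot : Real.sqrt lam < Real.pi)
    (heq : Real.sqrt (κ ^ 2 - lam)
      = -(Real.sqrt lam * (Real.cos (Real.sqrt lam) / Real.sin (Real.sqrt lam)))) :
    ∀ u : ℝ → ℝ,
      (∀ x, x ≤ 1 → u x = Real.sin (Real.sqrt lam * x)) →
      (∀ x, 1 ≤ x → u x = Real.sin (Real.sqrt lam)
          * Real.exp (-(Real.sqrt (κ ^ 2 - lam)) * (x - 1))) →
      u 0 = 0 ∧
      ContinuousOn u (Ici 0) ∧
      (∀ x ∈ Ioi (0:ℝ), DifferentiableAt ℝ u x) ∧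
      ContinuousOn (deriv u) (Ioi 0) ∧
      MemLp u 2 (volume.restrict (Ioi (0:ℝ))) ∧
      (∀ x ∈ Ioo (0:ℝ) 1, -(deriv (deriv u) x) = lam * u x) ∧
      (∀ x ∈ Ioi (1:ℝ), -(deriv (deriv u) x) + κ ^ 2 * u x = lam * u x) := by
  intro u hu1 hu2
  set s := Real.sqrt lam with hs_def
  set m := Real.sqrt (κ ^ 2 - lam) with hm_def
  have hs0 : 0 < s := Real.sqrt_pos.mpr hlam
  have hsin : 0 < Real.sin s := Real.sin_pos_of_pos_of_lt_pi hs0 hroot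
  have hm0 : 0 < m := Real.sqrt_pos.mpr (by linarith)
  have hss : s * s = lam := Real.mul_self_sqrt hlam.le
  have hmm : m * m = κ ^ 2 - lam := Real.mul_self_sqrt (by linarith)
  have hkey : m * Real.sin s = -(s * Real.cos s) := by
    rw [heq]; field_simp
  -- rewrite u as an explicit piecewise function
  set U : ℝ → ℝ := fun x => if x ≤ 1 then Real.sin (s * x)
      else Real.sin s * Real.exp (-m * (x - 1)) with hU_def
  have hUeq : u = U := by
    funext x
    by_cases hx : x ≤ 1
    · simp only [hU_def, if_pos hx]; exact hu1 x hx
    · simp only [hU_def, if_neg hx]; exact hu2 x (le_of_lt (lt_of_not_ge hx))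
  subst hUeq
  -- derivative formulas for the pieces
  have hlin : ∀ x : ℝ, HasDerivAt (fun y : ℝ => s * y) s x := by
    intro x; simpa using (hasDerivAt_id x).const_mul s
  have hg : ∀ x : ℝ, HasDerivAt (fun y => Real.sin (s * y)) (Real.cos (s * x) * s) x := by
    intro x; exact (Real.hasDerivAt_sin (s * x)).comp x (hlin x)
  have hg' : ∀ x : ℝ, HasDerivAt (fun y => Real.cos (s * y) * s)
      (-Real.sin (s * x) * s * s) x := by
    intro x
    have := ((Real.hasDerivAt_cos (s * x)).comp x (hlin x)).mul_const s
    simpa [mul_assoc] using this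
  have hinner : ∀ x : ℝ, HasDerivAt (fun y : ℝ => -m * (y - 1)) (-m) x := by
    intro x; simpa using ((hasDerivAt_id x).sub_const 1).const_mul (-m)
  have hexp : ∀ x : ℝ, HasDerivAt (fun y => Real.exp (-m * (y - 1)))
      (Real.exp (-m * (x - 1)) * (-m)) x := by
    intro x; exact (Real.hasDerivAt_exp (-m * (x - 1))).comp x (hinner x)
  have hh : ∀ x : ℝ, HasDerivAt (fun y => Real.sin s * Real.exp (-m * (y - 1)))
      (Real.sin s * (Real.exp (-m * (x - 1)) * (-m))) x := by
    intro x; exact (hexp x).const_mul (Real.sin s)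
  have hh' : ∀ x : ℝ, HasDerivAt (fun y => Real.sin s * (Real.exp (-m * (y - 1)) * (-m)))
      (Real.sin s * (Real.exp (-m * (x - 1)) * (-m) * (-m))) x := by
    intro x; exact ((hexp x).mul_const (-m)).const_mul (Real.sin s)
  -- values match at the junction
  have hDval : Real.sin s * (Real.exp (-m * (1 - 1)) * (-m)) = Real.cos (s * 1) * s := by
    simp only [sub_self, mul_zero, Real.exp_zero, one_mul, mul_one]
    linear_combination -hkey
  -- eventual equalities
  have hUg : ∀ x < (1:ℝ), U =ᶠ[nhds x] fun y => Real.sin (s * y) := by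
    intro x hx
    filter_upwards [Iio_mem_nhds hx] with y hy
    simp only [hU_def, if_pos (le_of_lt (mem_Iio.mp hy))]
  have hUh : ∀ x, 1 < x → U =ᶠ[nhds x] fun y => Real.sin s * Real.exp (-m * (y - 1)) := by
    intro x hx
    filter_upwards [Ioi_mem_nhds hx] with y hy
    simp only [hU_def, if_neg (not_le.mpr (mem_Ioi.mp hy))]
  -- U equals h on Ici 1
  have hUh1 : ∀ y ∈ Ici (1:ℝ), U y = Real.sin s * Real.exp (-m * (y - 1)) := by
    intro y hy
    rcases eq_or_lt_of_le (mem_Ici.mp hy) with h1 | h1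
    · rw [← h1]; simp [hU_def]
    · simp only [hU_def, if_neg (not_le.mpr h1)]
  -- derivative at the junction
  have hU1 : HasDerivAt U (Real.cos (s * 1) * s) 1 := by
    have hL : HasDerivWithinAt U (Real.cos (s * 1) * s) (Iic 1) 1 :=
      ((hg 1).hasDerivWithinAt).congr (fun y hy => by simp only [hU_def, if_pos (mem_Iic.mp hy)])
        (by simp [hU_def])
    have hR0 : HasDerivWithinAt U (Real.sin s * (Real.exp (-m * (1 - 1)) * (-m))) (Ici 1) 1 :=
      ((hh 1).hasDerivWithinAt).congr hUh1 (hUh1 1 self_mem_Ici)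
    have hR : HasDerivWithinAt U (Real.cos (s * 1) * s) (Ici 1) 1 := hDval ▸ hR0
    have := hL.union hR
    rw [Iic_union_Ici] at this
    exact this.hasDerivAt (by simp)
  -- the global derivative function
  set D : ℝ → ℝ := fun x => if x ≤ 1 then Real.cos (s * x) * s
      else Real.sin s * (Real.exp (-m * (x - 1)) * (-m)) with hD_def
  have hUD : ∀ x : ℝ, HasDerivAt U (D x) x := by
    intro x
    rcases lt_trichotomy x 1 with hx | hx | hx
    · have hDx : D x = Real.cos (s * x) * s := by simp only [hD_def, if_pos hx.le]
      rw [hDx]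
      exact (hg x).congr_of_eventuallyEq (hUg x hx)
    · subst hx
      have hDx : D 1 = Real.cos (s * 1) * s := by simp [hD_def]
      rw [hDx]; exact hU1
    · have hDx : D x = Real.sin s * (Real.exp (-m * (x - 1)) * (-m)) := by
        simp only [hD_def, if_neg (not_le.mpr hx)]
      rw [hDx]
      exact (hh x).congr_of_eventuallyEq (hUh x hx)
  have hderivD : deriv U = D := funext fun x => (hUD x).deriv
  -- continuity of U and D
  have hUcont : Continuous U := by
    rw [hU_def]
    apply Continuous.if_le (by fun_prop) (by fun_prop) continuous_id continuous_const
    intro x hx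
    simp only [id] at hx
    rw [hx]; simp
  have hDcont : Continuous D := by
    rw [hD_def]
    apply Continuous.if_le (by fun_prop) (by fun_prop) continuous_id continuous_const
    intro x hx
    simp only [id] at hx
    rw [hx]; exact hDval.symm
  refine ⟨by simp [hU_def], hUcont.continuousOn, fun x _ => (hUD x).differentiableAt,
    by rw [hderivD]; exact hDcont.continuousOn, ?_, ?_, ?_⟩
  · -- L² membership
    have hmeas : AEStronglyMeasurable U (volume.restrict (Ioi (0:ℝ))) :=
      hUcont.aestronglyMeasurable.restrict
    rw [memLp_two_iff_integrable_sq hmeas]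
    have : IntegrableOn (fun x => U x ^ 2) (Ioi 0) volume := by
      rw [← Ioc_union_Ioi_eq_Ioi (zero_le_one : (0:ℝ) ≤ 1)]
      apply IntegrableOn.union
      · exact (hUcont.pow 2).integrableOn_Ioc
      · have hint : IntegrableOn
            (fun x => Real.sin s ^ 2 * Real.exp (2 * m) * Real.exp (-(2 * m) * x))
            (Ioi 1) volume := by
          have := (exp_neg_integrableOn_Ioi 1 (by positivity : (0:ℝ) < 2 * m))
          exact this.const_mul (Real.sin s ^ 2 * Real.exp (2 * m))
        apply hint.congr_fun _ measurableSet_Ioi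
        intro x hx
        have hx1 : ¬ x ≤ 1 := not_le.mpr hx
        simp only [hU_def, if_neg hx1]
        have h1 : (Real.sin s * Real.exp (-m * (x - 1))) ^ 2
            = Real.sin s ^ 2 * (Real.exp (-m * (x - 1)) * Real.exp (-m * (x - 1))) := by ring
        rw [h1, ← Real.exp_add, mul_assoc, ← Real.exp_add]
        congr 2
        ring
    exact this
  · -- equation on (0,1)
    intro x hx
    have he : deriv U =ᶠ[nhds x] fun y => Real.cos (s * y) * s := by
      rw [hderivD]
      filter_upwards [Iio_mem_nhds hx.2] with y hy
      simp only [hD_def, if_pos (le_of_lt (mem_Iio.mp hy))]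
    have h2 : deriv (deriv U) x = -Real.sin (s * x) * s * s := by
      rw [he.deriv_eq]; exact (hg' x).deriv
    have hUx : U x = Real.sin (s * x) := by simp only [hU_def, if_pos hx.2.le]
    rw [h2, hUx]
    linear_combination Real.sin (s * x) * hss
  · -- equation on (1,∞)
    intro x hx
    have hx' : (1:ℝ) < x := hx
    have he : deriv U =ᶠ[nhds x] fun y => Real.sin s * (Real.exp (-m * (y - 1)) * (-m)) := by
      rw [hderivD]
      filter_upwards [Ioi_mem_nhds hx'] with y hy
      simp only [hD_def, if_neg (not_le.mpr (mem_Ioi.mp hy))]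
    have h2 : deriv (deriv U) x = Real.sin s * (Real.exp (-m * (x - 1)) * (-m) * (-m)) := by
      rw [he.deriv_eq]; exact (hh' x).deriv
    have hUx : U x = Real.sin s * Real.exp (-m * (x - 1)) := by
      simp only [hU_def, if_neg (not_le.mpr hx')]
    rw [h2, hUx]
    linear_combination (-(Real.sin s * Real.exp (-m * (x - 1)))) * hmm
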